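/- Let n ≥ 2 and let H be an n × n real matrix with entries in {±1}, satisfying H Hᵀ = n·I, whose first row (row index 0) consists solely of 1s. Define e_i = (1/√(n−1)) · (H(j,i))_{1 ≤ j ≤ n−1} ∈ ℝ^{n−1} for 0 ≤ i ≤ n−1. Then (e_i)_{i=0}^{n−1} is a Grassmannian frame for ℝ^{n−1}: it is a unit-norm frame with max_{i₁ < i₂} |⟨e_{i₁}, e_{i₂}⟩| = 1/(n−1), and every unit-norm frame (f_i)_{i=0}^{n−1} of n vectors in ℝ^{n−1} satisfies max_{i₁ < i₂} |⟨f_{i₁}, f_{i₂}⟩| ≥ 1/(n−1). -/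

import Mathlib

open scoped InnerProductSpace
open Finset

private lemma aux_sup_le {N : ℕ} (g : Fin N → Fin N → ℝ) (c : ℝ) (hc : 0 ≤ c)
    (h : ∀ i j : Fin N, i < j → |g i j| ≤ c) :
    (⨆ i₁ : Fin N, ⨆ i₂ : Fin N, ⨆ (_ : i₁ < i₂), |g i₁ i₂|) ≤ c := by
  refine Real.iSup_le (fun i => Real.iSup_le (fun j => ?_) hc) hc
  by_cases hij : i < j
  · rw [ciSup_pos hij]; exact h i j hij
  · haveI : IsEmpty (i < j) := ⟨hij⟩
    rw [Real.iSup_of_isEmpty]; exact hc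

private lemma aux_le_sup {N : ℕ} (g : Fin N → Fin N → ℝ) (i j : Fin N) (hij : i < j) :
    |g i j| ≤ ⨆ i₁ : Fin N, ⨆ i₂ : Fin N, ⨆ (_ : i₁ < i₂), |g i₁ i₂| := by
  have h1 : (⨆ (_ : i < j), |g i j|) = |g i j| :=
    ciSup_pos (f := fun _ : i < j => |g i j|) hij
  rw [← h1]
  have b1 : BddAbove (Set.range fun i₂ => ⨆ (_ : i < i₂), |g i i₂|) :=
    Set.Finite.bddAbove (Set.finite_range _)
  have b2 : BddAbove (Set.range fun i₁ : Fin N => ⨆ i₂, ⨆ (_ : i₁ < i₂), |g i₁ i₂|) :=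
    Set.Finite.bddAbove (Set.finite_range _)
  exact le_trans (le_ciSup b1 j) (le_ciSup b2 i)

private lemma aux_sum4_comm {N M : ℕ} (X : Fin N → Fin N → Fin M → Fin M → ℝ) :
    ∑ i : Fin N, ∑ j : Fin N, ∑ a : Fin M, ∑ b : Fin M, X i j a b
      = ∑ a : Fin M, ∑ b : Fin M, ∑ i : Fin N, ∑ j : Fin N, X i j a b :=
  calc ∑ i : Fin N, ∑ j : Fin N, ∑ a : Fin M, ∑ b : Fin M, X i j a b
      = ∑ i : Fin N, ∑ a : Fin M, ∑ j : Fin N, ∑ b : Fin M, X i j a b :=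
        Finset.sum_congr rfl fun _ _ => Finset.sum_comm
    _ = ∑ a : Fin M, ∑ i : Fin N, ∑ j : Fin N, ∑ b : Fin M, X i j a b := Finset.sum_comm
    _ = ∑ a : Fin M, ∑ i : Fin N, ∑ b : Fin M, ∑ j : Fin N, X i j a b :=
        Finset.sum_congr rfl fun _ _ => Finset.sum_congr rfl fun _ _ => Finset.sum_comm
    _ = ∑ a : Fin M, ∑ b : Fin M, ∑ i : Fin N, ∑ j : Fin N, X i j a b :=
        Finset.sum_congr rfl fun _ _ => Finset.sum_comm

private lemma aux_welch {N M : ℕ} (f : Fin N → Fin M → ℝ) :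
    (∑ a : Fin M, ∑ i : Fin N, f i a ^ 2) ^ 2 ≤
      (M : ℝ) * ∑ i : Fin N, ∑ j : Fin N, (∑ a : Fin M, f i a * f j a) ^ 2 := by
  set T : Fin M → Fin M → ℝ := fun a b => ∑ i, f i a * f i b with hT
  have h1 : (∑ i : Fin N, ∑ j : Fin N, (∑ a : Fin M, f i a * f j a) ^ 2)
      = ∑ a : Fin M, ∑ b : Fin M, T a b ^ 2 := by
    have e1 : ∀ i j : Fin N, (∑ a : Fin M, f i a * f j a) ^ 2
        = ∑ a : Fin M, ∑ b : Fin M, (f i a * f j a) * (f i b * f j b) := by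
      intro i j; rw [sq, Finset.sum_mul_sum]
    have e2 : ∀ a b : Fin M, T a b ^ 2
        = ∑ i : Fin N, ∑ j : Fin N, (f i a * f i b) * (f j a * f j b) := by
      intro a b; rw [sq, Finset.sum_mul_sum]
    simp only [e1, e2]
    rw [aux_sum4_comm]
    refine Finset.sum_congr rfl fun a _ => Finset.sum_congr rfl fun b _ => ?_
    exact Finset.sum_congr rfl fun i _ => Finset.sum_congr rfl fun j _ => by ring
  have h2 : ∑ a : Fin M, T a a ^ 2 ≤ ∑ a : Fin M, ∑ b : Fin M, T a b ^ 2 := by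
    refine Finset.sum_le_sum fun a _ => ?_
    exact Finset.single_le_sum (f := fun b => T a b ^ 2) (fun b _ => sq_nonneg _)
      (Finset.mem_univ a)
  have h3 : (∑ a : Fin M, T a a) ^ 2 ≤ (M : ℝ) * ∑ a : Fin M, T a a ^ 2 := by
    have := Finset.sum_mul_sq_le_sq_mul_sq Finset.univ (fun _ : Fin M => (1 : ℝ))
      (fun a => T a a)
    simpa [Finset.card_univ] using this
  have h4 : ∑ a : Fin M, T a a = ∑ a : Fin M, ∑ i : Fin N, f i a ^ 2 := by
    refine Finset.sum_congr rfl fun a _ => Finset.sum_congr rfl fun i _ => by ring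
  rw [h1, ← h4]
  calc (∑ a : Fin M, T a a) ^ 2 ≤ (M : ℝ) * ∑ a : Fin M, T a a ^ 2 := h3
    _ ≤ (M : ℝ) * ∑ a : Fin M, ∑ b : Fin M, T a b ^ 2 := by
        exact mul_le_mul_of_nonneg_left h2 (Nat.cast_nonneg M)

/-- The normalized truncated columns of a normalized `n × n` Hadamard matrix form
a Grassmannian frame for `ℝ^{n−1}`: they are a unit-norm frame with maximal frame
correlation `1/(n−1)`, and every unit-norm frame of `n` vectors in `ℝ^{n−1}` has
maximal frame correlation at least `1/(n−1)`. -/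
theorem stmt_7 (n : ℕ) (hn : 2 ≤ n) (H : Matrix (Fin n) (Fin n) ℝ)
    (hentries : ∀ i j, H i j = 1 ∨ H i j = -1)
    (hHad : H * H.transpose = (n : ℝ) • 1)
    (hrow : ∀ k : Fin n, H ⟨0, by omega⟩ k = 1)
    (e : Fin n → EuclideanSpace ℝ (Fin (n - 1)))
    (he : ∀ i : Fin n, ∀ j : Fin (n - 1),
      e i j = (1 / Real.sqrt ((n : ℝ) - 1)) * H ⟨j.val + 1, by omega⟩ i) :
    (∀ i : Fin n, ‖e i‖ = 1) ∧
      Submodule.span ℝ (Set.range e) = ⊤ ∧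
      (⨆ i₁ : Fin n, ⨆ i₂ : Fin n, ⨆ (_ : i₁ < i₂), |(⟪e i₁, e i₂⟫_ℝ)|) =
        1 / ((n : ℝ) - 1) ∧
      (∀ f : Fin n → EuclideanSpace ℝ (Fin (n - 1)),
        (∀ i, ‖f i‖ = 1) → Submodule.span ℝ (Set.range f) = ⊤ →
        1 / ((n : ℝ) - 1) ≤
          ⨆ i₁ : Fin n, ⨆ i₂ : Fin n, ⨆ (_ : i₁ < i₂), |(⟪f i₁, f i₂⟫_ℝ)|) := by
  obtain ⟨m, rfl⟩ : ∃ m, n = m + 1 := ⟨n - 1, by omega⟩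
  have hm : 1 ≤ m := by omega
  have hm0 : (0:ℝ) < (m:ℝ) := by exact_mod_cast hm
  have hne : ((m+1:ℕ):ℝ) ≠ 0 := by positivity
  -- column orthogonality
  have hcol : H.transpose * H = ((m+1:ℕ):ℝ) • 1 := by
    have hinv : H * (((m+1:ℕ):ℝ)⁻¹ • H.transpose) = 1 := by
      rw [Matrix.mul_smul, hHad, smul_smul, inv_mul_cancel₀ hne, one_smul]
    have hinv' := mul_eq_one_comm.mp hinv
    rw [Matrix.smul_mul] at hinv'
    calc H.transpose * H
        = ((m+1:ℕ):ℝ) • (((m+1:ℕ):ℝ)⁻¹ • (H.transpose * H)) := by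
          rw [smul_smul, mul_inv_cancel₀ hne, one_smul]
      _ = ((m+1:ℕ):ℝ) • 1 := by rw [hinv']
  have hdot : ∀ i j : Fin (m+1), ∑ k : Fin (m+1), H k i * H k j
      = if i = j then ((m+1:ℕ):ℝ) else 0 := by
    intro i j
    have h := congrFun (congrFun hcol i) j
    simpa [Matrix.mul_apply, Matrix.transpose_apply, Matrix.smul_apply,
      Matrix.one_apply, mul_ite, mul_one, mul_zero, smul_eq_mul] using h
  have H0 : ∀ k : Fin (m+1), H 0 k = 1 := fun k => hrow k
  have hdot' : ∀ i j : Fin (m+1), ∑ k : Fin m, H k.succ i * H k.succ j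
      = (if i = j then ((m+1:ℕ):ℝ) else 0) - 1 := by
    intro i j
    have h := hdot i j
    rw [Fin.sum_univ_succ, H0 i, H0 j, one_mul] at h
    linarith
  -- inner products of e
  have hs : Real.sqrt (((m+1:ℕ):ℝ) - 1) = Real.sqrt (m:ℝ) := by push_cast; ring_nf
  have hsq : Real.sqrt (m:ℝ) ^ 2 = (m:ℝ) := Real.sq_sqrt hm0.le
  have hspos : (0:ℝ) < Real.sqrt (m:ℝ) := Real.sqrt_pos.mpr hm0
  have he' : ∀ (i : Fin (m+1)) (a : Fin (m+1-1)),
      e i a = (1 / Real.sqrt (m:ℝ)) * H ⟨a.val + 1, by omega⟩ i := by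
    intro i a; rw [he i a, hs]
  have hsum_eq : ∀ (F : Fin (m+1) → ℝ),
      ∑ a : Fin (m+1-1), F ⟨a.val + 1, by omega⟩ = ∑ k : Fin m, F k.succ := by
    intro F; rfl
  have hinner : ∀ (x y : EuclideanSpace ℝ (Fin (m+1-1))),
      ⟪x, y⟫_ℝ = ∑ a : Fin (m+1-1), x a * y a := by
    intro x y
    rw [PiLp.inner_apply]
    exact Finset.sum_congr rfl fun a _ => by
      rw [RCLike.inner_apply]; simp [mul_comm]
  have hip : ∀ i j : Fin (m+1),
      ⟪e i, e j⟫_ℝ = ((if i = j then ((m+1:ℕ):ℝ) else 0) - 1) / m := by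
    intro i j
    rw [hinner]
    have step : ∀ a : Fin (m+1-1), e i a * e j a
        = (1 / Real.sqrt (m:ℝ))^2 *
          (H ⟨a.val + 1, by omega⟩ i * H ⟨a.val + 1, by omega⟩ j) := by
      intro a; rw [he' i a, he' j a]; ring
    rw [Finset.sum_congr rfl fun a _ => step a, ← Finset.mul_sum]
    rw [hsum_eq (fun k => H k i * H k j), hdot' i j]
    rw [div_pow, one_pow, hsq]
    ring
  have hipd : ∀ i : Fin (m+1), ⟪e i, e i⟫_ℝ = 1 := by
    intro i
    rw [hip i i, if_pos rfl]
    push_cast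
    field_simp
    ring
  -- indices 0 < 1
  have h01 : (⟨0, by omega⟩ : Fin (m+1)) < ⟨1, by omega⟩ := by
    exact Fin.mk_lt_mk.mpr one_pos
  refine ⟨?_, ?_, ?_, ?_⟩
  · -- norms
    intro i
    have h := hipd i
    rw [real_inner_self_eq_norm_sq] at h
    nlinarith [norm_nonneg (e i)]
  · -- span
    rw [← Submodule.orthogonal_eq_bot_iff, Submodule.eq_bot_iff]
    intro v hv
    have hv' : ∀ i : Fin (m+1), ⟪e i, v⟫_ℝ = 0 := fun i =>
      (Submodule.mem_orthogonal _ v).mp hv (e i)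
        (Submodule.subset_span (Set.mem_range_self i))
    set w : Fin (m+1) → ℝ := Fin.cons 0 (fun a : Fin m => v a) with hw_def
    have hw : Matrix.vecMul w H = 0 := by
      funext i
      have hvi := hv' i
      rw [hinner] at hvi
      have step : ∀ a : Fin (m+1-1), e i a * v a
          = (1 / Real.sqrt (m:ℝ)) * (H ⟨a.val + 1, by omega⟩ i * v a) := by
        intro a; rw [he' i a]; ring
      rw [Finset.sum_congr rfl fun a _ => step a, ← Finset.mul_sum] at hvi
      have hzero : ∑ a : Fin (m+1-1), H ⟨a.val + 1, by omega⟩ i * v a = 0 := by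
        have hne' : (1 / Real.sqrt (m:ℝ)) ≠ 0 := by positivity
        exact (mul_eq_zero.mp hvi).resolve_left hne'
      have hzero' : ∑ k : Fin m, H k.succ i * v k = 0 := hzero
      show ∑ k : Fin (m+1), w k * H k i = 0
      rw [Fin.sum_univ_succ]
      simp only [hw_def, Fin.cons_zero, Fin.cons_succ, zero_mul, zero_add]
      rw [← hzero']
      exact Finset.sum_congr rfl fun k _ => by ring
    have hw0 : w = 0 := by
      have h2 := congrArg (fun u => Matrix.vecMul u H.transpose) hw
      simp only [Matrix.vecMul_vecMul, hHad, Matrix.zero_vecMul] at h2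
      have h3 : ((m+1:ℕ):ℝ) • w = 0 := by
        funext k
        have hk := congrFun h2 k
        simpa [Matrix.vecMul, dotProduct, Matrix.smul_apply, Matrix.one_apply,
          mul_ite, mul_one, mul_zero, Finset.sum_ite_eq, smul_eq_mul, mul_comm] using hk
      have := smul_eq_zero.mp h3
      rcases this with h | h
      · exact absurd h hne
      · exact h
    ext a
    have := congrFun hw0 (⟨a.val + 1, by omega⟩ : Fin (m+1))
    have ha : w ⟨a.val + 1, by omega⟩ = v a := by
      show (Fin.cons 0 (fun a : Fin m => v a) : Fin (m+1) → ℝ) (Fin.succ ⟨a.val, by omega⟩) = v a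
      rw [Fin.cons_succ]
      exact congrArg v (Fin.ext rfl)
    rw [ha] at this
    exact this
  · -- sup for e
    have hoff : ∀ i j : Fin (m+1), i ≠ j → |⟪e i, e j⟫_ℝ| = 1 / (((m+1:ℕ):ℝ) - 1) := by
      intro i j hij
      rw [hip i j, if_neg hij]
      rw [zero_sub, neg_div, abs_neg, abs_of_pos (one_div_pos.mpr hm0)]
      congr 1
      push_cast; ring
    have hpos : (0:ℝ) ≤ 1 / (((m+1:ℕ):ℝ) - 1) := by
      have : ((m+1:ℕ):ℝ) - 1 = (m:ℝ) := by push_cast; ring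
      rw [this]
      positivity
    apply le_antisymm
    · exact aux_sup_le (fun i j => ⟪e i, e j⟫_ℝ) _ hpos
        (fun i j hij => le_of_eq (hoff i j (ne_of_lt hij)))
    · rw [← hoff _ _ (ne_of_lt h01)]
      exact aux_le_sup (fun i j => ⟪e i, e j⟫_ℝ) _ _ h01
  · -- Welch bound
    intro f hf _
    set c := ⨆ i₁ : Fin (m+1), ⨆ i₂ : Fin (m+1), ⨆ (_ : i₁ < i₂), |(⟪f i₁, f i₂⟫_ℝ)|
      with hc_def
    have hcn : (0:ℝ) ≤ c :=
      le_trans (abs_nonneg _) (aux_le_sup (fun i j => ⟪f i, f j⟫_ℝ) _ _ h01)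
    have hble : ∀ i j : Fin (m+1), i ≠ j → |⟪f i, f j⟫_ℝ| ≤ c := by
      intro i j hij
      rcases lt_or_gt_of_ne hij with h | h
      · exact aux_le_sup (fun i j => ⟪f i, f j⟫_ℝ) i j h
      · rw [real_inner_comm]
        exact aux_le_sup (fun i j => ⟪f i, f j⟫_ℝ) j i h
    have hnorm2 : ∀ i, ∑ a : Fin (m+1-1), f i a * f i a = 1 := by
      intro i
      have h2 : ⟪f i, f i⟫_ℝ = 1 := by
        rw [real_inner_self_eq_norm_sq, hf i]; norm_num
      rw [hinner] at h2
      exact h2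
    have key := aux_welch (N := m+1) (M := m+1-1) (fun i a => f i a)
    have htr : ∑ a : Fin (m+1-1), ∑ i : Fin (m+1), f i a ^ 2 = ((m+1:ℕ):ℝ) := by
      rw [Finset.sum_comm]
      have : ∀ i : Fin (m+1), ∑ a : Fin (m+1-1), f i a ^ 2 = 1 := by
        intro i
        rw [← hnorm2 i]
        exact Finset.sum_congr rfl fun a _ => sq (f i a) ▸ by ring
      rw [Finset.sum_congr rfl fun i _ => this i]
      simp
    have hS_le : ∑ i : Fin (m+1), ∑ j : Fin (m+1), (∑ a : Fin (m+1-1), f i a * f j a) ^ 2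
        ≤ ((m+1:ℕ):ℝ) * (1 + m * c^2) := by
      have hrowb : ∀ i : Fin (m+1),
          ∑ j : Fin (m+1), (∑ a : Fin (m+1-1), f i a * f j a) ^ 2 ≤ 1 + m * c^2 := by
        intro i
        rw [← Finset.add_sum_erase Finset.univ _ (Finset.mem_univ i)]
        have hdiag : (∑ a : Fin (m+1-1), f i a * f i a) ^ 2 = 1 := by
          rw [hnorm2 i]; norm_num
        rw [hdiag]
        have hoffb : ∑ j ∈ Finset.univ.erase i,
            (∑ a : Fin (m+1-1), f i a * f j a) ^ 2 ≤ (m:ℝ) * c^2 := by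
          have hcard : (Finset.univ.erase i).card = m := by
            rw [Finset.card_erase_of_mem (Finset.mem_univ i), Finset.card_univ]
            simp
          calc ∑ j ∈ Finset.univ.erase i, (∑ a : Fin (m+1-1), f i a * f j a) ^ 2
              ≤ ∑ _j ∈ Finset.univ.erase i, c^2 := by
                refine Finset.sum_le_sum fun j hj => ?_
                have hij : i ≠ j := (Finset.ne_of_mem_erase hj).symm
                have h1 : |⟪f i, f j⟫_ℝ| ≤ c := hble i j hij
                have h2 : (⟪f i, f j⟫_ℝ)^2 ≤ c^2 := by
                  rw [← sq_abs]
                  exact pow_le_pow_left₀ (abs_nonneg _) h1 2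
                rw [hinner] at h2
                exact h2
            _ = (m:ℝ) * c^2 := by rw [Finset.sum_const, hcard]; simp [nsmul_eq_mul]
        linarith
      calc ∑ i : Fin (m+1), ∑ j : Fin (m+1), (∑ a : Fin (m+1-1), f i a * f j a) ^ 2
          ≤ ∑ _i : Fin (m+1), (1 + m * c^2) := Finset.sum_le_sum fun i _ => hrowb i
        _ = ((m+1:ℕ):ℝ) * (1 + m * c^2) := by
            rw [Finset.sum_const, Finset.card_univ]; simp [nsmul_eq_mul]
            push_cast; ring
    have hcast2 : (((m+1-1:ℕ)):ℝ) = (m:ℝ) := by norm_num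
    have hkey2 : (((m+1:ℕ)):ℝ)^2 ≤ (m:ℝ) *
        ∑ i : Fin (m+1), ∑ j : Fin (m+1), (∑ a : Fin (m+1-1), f i a * f j a) ^ 2 := by
      calc (((m+1:ℕ)):ℝ)^2 = (∑ a : Fin (m+1-1), ∑ i : Fin (m+1), f i a ^ 2) ^ 2 := by
            rw [htr]
        _ ≤ (((m+1-1:ℕ)):ℝ) * ∑ i : Fin (m+1), ∑ j : Fin (m+1),
              (∑ a : Fin (m+1-1), f i a * f j a) ^ 2 := key
        _ = (m:ℝ) * _ := by rw [hcast2]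
    have h1 : (((m+1:ℕ)):ℝ)^2 ≤ (m:ℝ) * (((m+1:ℕ):ℝ) * (1 + m * c^2)) :=
      le_trans hkey2 (mul_le_mul_of_nonneg_left hS_le hm0.le)
    have hmc : (1:ℝ) ≤ (m:ℝ)^2 * c^2 := by
      have hp : (0:ℝ) < ((m+1:ℕ):ℝ) := by positivity
      push_cast at h1 ⊢
      nlinarith [h1, hm0, sq_nonneg c]
    have h3 : (1:ℝ) ≤ (m:ℝ) * c := by
      nlinarith [mul_nonneg hm0.le hcn, hmc]
    have : ((m+1:ℕ):ℝ) - 1 = (m:ℝ) := by push_cast; ring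
    rw [this, div_le_iff₀ hm0]
    linarith
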